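/- Let A → B be a homomorphism of commutative rings, let M be a free B-module, and let N be an arbitrary B-module. Then there is an isomorphism of A-modules M ⊗_A N ≅ (M ⊗_B N) ⊗_A B, where on the left M and N are regarded as A-modules by restriction of scalars. -/

import Mathlib

open TensorProduct

/-- for a homomorphism of commutative rings `A → B`, a free `B`-module
`M` and an arbitrary `B`-module `N`, there is an isomorphism of `A`-modules
`M ⊗_A N ≅ (M ⊗_B N) ⊗_A B`, where `M` and `N` on the left are regarded as `A`-modules
by restriction of scalars. -/
theorem free_module_restricted_tensor_product (A B : Type*) [CommRing A] [CommRing B]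
    [Algebra A B]
    (M N : Type*) [AddCommGroup M] [Module B M] [AddCommGroup N] [Module B N]
    [Module A M] [IsScalarTower A B M] [Module A N] [IsScalarTower A B N]
    [Module.Free B M] :
    Nonempty ((M ⊗[A] N) ≃ₗ[A] ((M ⊗[B] N) ⊗[A] B)) := by
  classical
  obtain ⟨ι, b⟩ := Module.Free.exists_basis (R := B) (M := M)
  -- left side: M ⊗[A] N ≃ ι →₀ (B ⊗[A] N) ≃ ι →₀ (N ⊗[A] B)
  let e1 : (M ⊗[A] N) ≃ₗ[A] ((ι →₀ B) ⊗[A] N) :=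
    TensorProduct.congr (b.repr.restrictScalars A) (LinearEquiv.refl A N)
  let e2 : ((ι →₀ B) ⊗[A] N) ≃ₗ[A] (ι →₀ (B ⊗[A] N)) :=
    TensorProduct.finsuppLeft A A B N ι
  let e3 : (ι →₀ (B ⊗[A] N)) ≃ₗ[A] (ι →₀ (N ⊗[A] B)) :=
    Finsupp.mapRange.linearEquiv (TensorProduct.comm A B N)
  -- right side: (M ⊗[B] N) ⊗[A] B ≃ (ι →₀ N) ⊗[A] B ≃ ι →₀ (N ⊗[A] B)
  let f1 : ((M ⊗[B] N) ⊗[A] B) ≃ₗ[A] (((ι →₀ N)) ⊗[A] B) :=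
    TensorProduct.congr
      (((TensorProduct.congr b.repr (LinearEquiv.refl B N)).trans
        (TensorProduct.finsuppScalarLeft B N ι)).restrictScalars A)
      (LinearEquiv.refl A B)
  let f2 : ((ι →₀ N) ⊗[A] B) ≃ₗ[A] (ι →₀ (N ⊗[A] B)) :=
    TensorProduct.finsuppLeft A A N B ι
  exact ⟨e1 ≪≫ₗ e2 ≪≫ₗ e3 ≪≫ₗ f2.symm ≪≫ₗ f1.symm⟩
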